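/- The Alexander polynomial Δ(t) = -n t + (2n+1) - n t^{-1} factors as f(t)·f(t^{-1}) for some polynomial f with integer coefficients if and only if n = m(m+1) for some integer m. -/

import Mathlib

open LaurentPolynomial

/-- Evaluation of an integer Laurent polynomial at `-1`. -/
noncomputable def evalNegOne : ℤ[T;T⁻¹] →+* ℤ :=
  AddMonoidAlgebra.liftNCRingHom (RingHom.id ℤ)
    ((Units.coeHom ℤ).comp (zpowersHom ℤˣ (-1)))
    (fun _ _ => Commute.all _ _)

lemma evalNegOne_T (k : ℤ) : evalNegOne (T k) = ((-1 : ℤˣ) ^ k : ℤˣ) := by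
  show AddMonoidAlgebra.liftNC _ _ (AddMonoidAlgebra.single k (1:ℤ) : ℤ[T;T⁻¹]) = _
  rw [AddMonoidAlgebra.liftNC_single]
  simp [zpowersHom]

lemma evalNegOne_C (r : ℤ) : evalNegOne (C r) = r := by
  show AddMonoidAlgebra.liftNC _ _ (AddMonoidAlgebra.single 0 r : ℤ[T;T⁻¹]) = _
  rw [AddMonoidAlgebra.liftNC_single]
  simp

lemma evalNegOne_invert (p : ℤ[T;T⁻¹]) : evalNegOne (invert p) = evalNegOne p := by
  induction p using LaurentPolynomial.induction_on' with
  | add p q hp hq => simp [map_add, hp, hq]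
  | C_mul_T k r =>
    simp only [map_mul, invert_C, invert_T, evalNegOne_T]
    congr 2
    rw [zpow_neg]
    norm_num

lemma evalNegOne_toLaurent (f : Polynomial ℤ) :
    evalNegOne f.toLaurent = f.eval (-1) := by
  induction f using Polynomial.induction_on' with
  | add p q hp hq => simp [hp, hq]
  | monomial k r =>
    simp only [Polynomial.toLaurent_C_mul_T, map_mul, evalNegOne_C, evalNegOne_T,
      Polynomial.eval_monomial]
    congr 1

/-- The Alexander polynomial `Δ(t) = -n t + (2n+1) - n t⁻¹` factors as `f(t)·f(t⁻¹)`
for some integer polynomial `f` iff `n = m(m+1)` for some integer `m`. -/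
theorem alexander_whitehead_fox_milnor (n : ℤ) :
    (∃ f : Polynomial ℤ,
        C (-n) * T 1 + C (2 * n + 1) + C (-n) * T (-1) =
          f.toLaurent * invert f.toLaurent) ↔ ∃ m : ℤ, n = m * (m + 1) := by
  constructor
  · rintro ⟨f, hf⟩
    have h := congrArg evalNegOne hf
    simp only [map_add, map_mul, evalNegOne_C, evalNegOne_T, evalNegOne_invert,
      evalNegOne_toLaurent] at h
    norm_num at h
    obtain ⟨c, hc | hc⟩ := Int.even_or_odd' (f.eval (-1))
    · exfalso
      rw [hc] at h
      have hd : ∃ d : ℤ, n + (2 * n + 1) + n = 4 * d := ⟨c * c, by linarith [h]⟩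
      obtain ⟨d, hd⟩ := hd
      omega
    · rw [hc] at h
      have h2 : 4 * n = 4 * (c * (c + 1)) := by linear_combination h
      exact ⟨c, mul_left_cancel₀ (by norm_num : (4:ℤ) ≠ 0) h2⟩
  · rintro ⟨m, rfl⟩
    refine ⟨Polynomial.C m * Polynomial.X - Polynomial.C (m + 1), ?_⟩
    have ht : (Polynomial.C m * Polynomial.X - Polynomial.C (m + 1)).toLaurent
        = C m * T 1 - C (m + 1) := by
      simp [sub_eq_add_neg]
    rw [ht]; simp only [map_sub, map_mul, invert_C, invert_T]
    have e1 : (T 1 * T (-1) : ℤ[T;T⁻¹]) = 1 := by rw [← T_add]; norm_num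
    have hc1 : (C (-(m * (m+1))) : ℤ[T;T⁻¹]) = -(C m * C (m+1)) := by
      rw [map_neg, map_mul]
    have hc2 : (C (2 * (m * (m+1)) + 1) : ℤ[T;T⁻¹]) = C m * C m + C (m+1) * C (m+1) := by
      rw [← map_mul, ← map_mul, ← map_add]
      congr 1
      ring
    rw [hc1, hc2]
    linear_combination (-(C m * C m) : ℤ[T;T⁻¹]) * e1
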